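/- If the disjunction (B ∨ C) ∨ Ā is provable in the system with axiom A ∨ ¬A ∨ B̄ and rules permutation, associativity, double negation introduction, and De Morgan, then so is B ∨ C ∨ Ā, and conversely (the associativity rule is invertible with respect to provability). -/
import Mathlib


/-- Propositional formulas built from letters by negation and disjunction. -/
inductive Fm where
  | letter : ℕ → Fm
  | neg : Fm → Fm
  | or : Fm → Fm → Fm
deriving DecidableEq

/-- Boolean evaluation under a valuation of the letters. -/
def Fm.eval (v : ℕ → Bool) : Fm → Bool
  | .letter n => v n
  | .neg a => !(a.eval v)
  | .or a b => a.eval v || b.eval v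

/-- A formula is a tautology if it is true under every valuation. -/
def Taut (A : Fm) : Prop := ∀ v : ℕ → Bool, A.eval v = true

/-- Right-associated disjunction `A ∨ B₁ ∨ ⋯ ∨ Bₙ` (the list possibly empty). -/
def disj : Fm → List Fm → Fm
  | A, [] => A
  | A, B :: l => .or A (disj B l)

/-- Provability: axiom scheme `A ∨ ¬A ∨ B̄`, rules: permutation of disjuncts,
associativity, double negation introduction, De Morgan. -/
inductive Prov : Fm → Prop where
  | ax (A : Fm) (l : List Fm) : Prov (disj A (.neg A :: l))
  | perm (A B : Fm) (l l' : List Fm) : (A :: l).Perm (B :: l') →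
      Prov (disj A l) → Prov (disj B l')
  | assoc (A B : Fm) (l : List Fm) :
      Prov (disj A (B :: l)) → Prov (disj (.or A B) l)
  | dneg (A : Fm) (l : List Fm) :
      Prov (disj A l) → Prov (disj (.neg (.neg A)) l)
  | demorgan (A B : Fm) (l : List Fm) :
      Prov (disj (.neg A) l) → Prov (disj (.neg B) l) →
      Prov (disj (.neg (.or A B)) l)

/-! Auxiliary development: soundness and completeness. -/

def evl (v : ℕ → Bool) : List Fm → Bool
  | [] => false
  | A :: l => A.eval v || evl v l

lemma disj_eval (v : ℕ → Bool) (A : Fm) (l : List Fm) :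
    (disj A l).eval v = (A.eval v || evl v l) := by
  induction l generalizing A with
  | nil => simp [disj, evl]
  | cons B l ih => simp [disj, evl, Fm.eval, ih B, Bool.or_assoc]

lemma evl_perm {l l' : List Fm} (h : l.Perm l') (v : ℕ → Bool) :
    evl v l = evl v l' := by
  induction h with
  | nil => rfl
  | cons x _ ih => simp [evl, ih]
  | swap x y l =>
      simp only [evl, ← Bool.or_assoc]
      rw [Bool.or_comm (y.eval v)]
  | trans _ _ ih1 ih2 => rw [ih1, ih2]

lemma soundness {D : Fm} (h : Prov D) : Taut D := by
  induction h with
  | ax A l =>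
      intro v
      simp only [disj_eval, evl, Fm.eval]
      cases A.eval v <;> simp
  | perm A B l l' hp _ ih =>
      intro v
      have h2 := evl_perm hp v
      simp only [evl] at h2
      have h1 := ih v
      rw [disj_eval] at h1 ⊢
      rw [← h2]
      exact h1
  | assoc A B l _ ih =>
      intro v
      have h1 := ih v
      simp only [disj_eval, evl, Fm.eval] at h1 ⊢
      simpa [Bool.or_assoc] using h1
  | dneg A l _ ih =>
      intro v
      have h1 := ih v
      simp only [disj_eval, Fm.eval] at h1 ⊢
      simpa using h1
  | demorgan A B l _ _ ih1 ih2 =>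
      intro v
      have h1 := ih1 v
      have h2 := ih2 v
      simp only [disj_eval, Fm.eval] at h1 h2 ⊢
      cases hA : A.eval v <;> cases hB : B.eval v <;>
        cases he : evl v l <;> simp_all

def Fm.size : Fm → ℕ
  | .letter _ => 1
  | .neg a => a.size + 1
  | .or a b => a.size + b.size + 1

lemma Fm.size_pos (A : Fm) : 1 ≤ A.size := by
  cases A <;> simp [Fm.size]

def lsize (l : List Fm) : ℕ := (l.map Fm.size).sum

lemma lsize_cons (A : Fm) (l : List Fm) : lsize (A :: l) = A.size + lsize l := by
  simp [lsize]

lemma lsize_append (l₁ l₂ : List Fm) : lsize (l₁ ++ l₂) = lsize l₁ + lsize l₂ := by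
  simp [lsize]

def ProvL : List Fm → Prop
  | [] => False
  | A :: l => Prov (disj A l)

lemma provL_perm {l l' : List Fm} (h : l.Perm l') : ProvL l → ProvL l' := by
  cases l with
  | nil => intro h'; exact h'.elim
  | cons A m =>
      cases l' with
      | nil => exact absurd h.length_eq (by simp)
      | cons B m' => exact Prov.perm A B m m' h

def IsLit : Fm → Prop
  | .letter _ => True
  | .neg (.letter _) => True
  | _ => False

lemma evl_false_of (v : ℕ → Bool) (l : List Fm)
    (h : ∀ D ∈ l, D.eval v = false) : evl v l = false := by
  induction l with
  | nil => rfl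
  | cons A m ih =>
      simp only [evl, Bool.or_eq_false_iff]
      exact ⟨h A (by simp), ih fun D hD => h D (by simp [hD])⟩

lemma lit_case (l : List Fm) (hlit : ∀ D ∈ l, IsLit D)
    (ht : ∀ v, evl v l = true) : ProvL l := by
  -- find a complementary pair
  by_cases hp : ∃ n, Fm.letter n ∈ l ∧ Fm.neg (Fm.letter n) ∈ l
  · obtain ⟨n, h1, h2⟩ := hp
    have hne : (Fm.letter n : Fm) ≠ Fm.neg (Fm.letter n) := by simp
    have p1 : l.Perm (Fm.letter n :: l.erase (Fm.letter n)) :=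
      List.perm_cons_erase h1
    have h2' : Fm.neg (Fm.letter n) ∈ l.erase (Fm.letter n) :=
      (List.mem_erase_of_ne (Ne.symm hne)).mpr h2
    have p2 : l.erase (Fm.letter n) |>.Perm
        (Fm.neg (Fm.letter n) :: (l.erase (Fm.letter n)).erase (Fm.neg (Fm.letter n))) :=
      List.perm_cons_erase h2'
    have p3 : l.Perm (Fm.letter n :: Fm.neg (Fm.letter n) ::
        (l.erase (Fm.letter n)).erase (Fm.neg (Fm.letter n))) :=
      p1.trans (p2.cons _)
    refine provL_perm p3.symm ?_
    exact Prov.ax (Fm.letter n) _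
  · exfalso
    push_neg at hp
    set v : ℕ → Bool := fun n => decide (Fm.neg (Fm.letter n) ∈ l) with hv
    have : evl v l = false := by
      apply evl_false_of
      intro D hD
      have := hlit D hD
      match D, this with
      | .letter n, _ =>
          simp only [Fm.eval, hv]
          simp [hp n hD]
      | .neg (.letter n), _ =>
          simp only [Fm.eval, hv]
          simp [hD]
    rw [ht v] at this
    exact Bool.noConfusion this

lemma complete_aux (n : ℕ) : ∀ l : List Fm, lsize l < n →
    (∀ v, evl v l = true) → ProvL l := by
  induction n with
  | zero => intro l h; omega
  | succ n ih =>
      intro l hsz ht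
      by_cases hlit : ∀ D ∈ l, IsLit D
      · exact lit_case l hlit ht
      · push_neg at hlit
        obtain ⟨D, hD, hnl⟩ := hlit
        obtain ⟨l₁, l₂, rfl⟩ := List.append_of_mem hD
        have pmid : (l₁ ++ D :: l₂).Perm (D :: (l₁ ++ l₂)) := List.perm_middle
        have hsz' : lsize (l₁ ++ D :: l₂) = D.size + lsize (l₁ ++ l₂) := by
          simp [lsize_append, lsize_cons]; omega
        have htD : ∀ v, (D.eval v || evl v (l₁ ++ l₂)) = true := by
          intro v
          have := ht v
          rw [evl_perm pmid v] at this
          simpa [evl] using this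
        match D, hnl with
        | .letter _, hnl => exact absurd trivial hnl
        | .neg (.letter _), hnl => exact absurd trivial hnl
        | .neg (.neg F), _ =>
            have hs : lsize (F :: (l₁ ++ l₂)) < n := by
              rw [lsize_cons]
              have := Fm.size_pos F
              simp [Fm.size] at hsz'
              omega
            have h := ih (F :: (l₁ ++ l₂)) hs (by
              intro v
              have := htD v
              simpa [evl, Fm.eval] using this)
            have h' : Prov (disj (Fm.neg (Fm.neg F)) (l₁ ++ l₂)) :=
              Prov.dneg F _ h
            exact provL_perm pmid.symm h'
        | .neg (.or E F), _ =>
            have hsE : lsize (Fm.neg E :: (l₁ ++ l₂)) < n := by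
              rw [lsize_cons]
              have := Fm.size_pos F
              simp [Fm.size] at hsz' ⊢
              omega
            have hsF : lsize (Fm.neg F :: (l₁ ++ l₂)) < n := by
              rw [lsize_cons]
              have := Fm.size_pos E
              simp [Fm.size] at hsz' ⊢
              omega
            have hE := ih (Fm.neg E :: (l₁ ++ l₂)) hsE (by
              intro v
              have := htD v
              simp only [evl, Fm.eval] at this ⊢
              cases hA : E.eval v <;> cases hB : F.eval v <;>
                cases he : evl v (l₁ ++ l₂) <;> simp_all)
            have hF := ih (Fm.neg F :: (l₁ ++ l₂)) hsF (by
              intro v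
              have := htD v
              simp only [evl, Fm.eval] at this ⊢
              cases hA : E.eval v <;> cases hB : F.eval v <;>
                cases he : evl v (l₁ ++ l₂) <;> simp_all)
            have h' : Prov (disj (Fm.neg (Fm.or E F)) (l₁ ++ l₂)) :=
              Prov.demorgan E F _ hE hF
            exact provL_perm pmid.symm h'
        | .or E F, _ =>
            have hs : lsize (E :: F :: (l₁ ++ l₂)) < n := by
              rw [lsize_cons, lsize_cons]
              simp [Fm.size] at hsz'
              omega
            have h := ih (E :: F :: (l₁ ++ l₂)) hs (by
              intro v
              have := htD v
              simpa [evl, Fm.eval, Bool.or_assoc] using this)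
            have h' : Prov (disj (Fm.or E F) (l₁ ++ l₂)) :=
              Prov.assoc E F _ h
            exact provL_perm pmid.symm h'

lemma complete (l : List Fm) (ht : ∀ v, evl v l = true) : ProvL l :=
  complete_aux (lsize l + 1) l (by omega) ht

theorem assoc_invertible (B C : Fm) (l : List Fm) :
    Prov (disj (.or B C) l) ↔ Prov (disj B (C :: l)) := by
  constructor
  · intro h
    have hs := soundness h
    have ht : ∀ v, evl v (B :: C :: l) = true := by
      intro v
      have := hs v
      simp only [disj_eval, Fm.eval, evl] at this ⊢
      simpa [Bool.or_assoc] using this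
    exact complete (B :: C :: l) ht
  · exact Prov.assoc B C l
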